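/- (Courant nodal domain theorem for positivity preserving forms) Let Q be a positivity preserving form with compact resolvent and eigenvalues λ₁ ≤ λ₂ ≤ ... counted with multiplicity. Let f be an eigenfunction for λₙ with multiplicity k, and suppose f± ∈ D(Q^𝒜_{F±}) for a nest 𝒜. Then f has at most n + k − 1 (Q,𝒜)-nodal domains. -/

import Mathlib

open MeasureTheory Filter Topology RealInnerProductSpace

noncomputable section

variable {X : Type*} [MeasurableSpace X]

open scoped Classical in
/-- Multiplication by the indicator function of a set `A`, as a map on `L²`. -/
def indMul {μ : Measure X} (A : Set X) (f : Lp ℝ 2 μ) : Lp ℝ 2 μ :=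
  if h : MeasurableSet A then ((Lp.memLp f).indicator h).toLp else 0

/-- A closed (nonnegative, symmetric) quadratic form in the wide sense on `L²(X,m)`:
its domain is a not necessarily dense subspace which is complete in the form norm. -/
structure WideForm (μ : Measure X) where
  dom : Submodule ℝ (Lp ℝ 2 μ)
  Q : Lp ℝ 2 μ → Lp ℝ 2 μ → ℝ
  symm : ∀ u v, Q u v = Q v u
  add_left : ∀ u v w, Q (u + v) w = Q u w + Q v w
  smul_left : ∀ (c : ℝ) u v, Q (c • u) v = c * Q u v
  nonneg : ∀ u, 0 ≤ Q u u
  closed : ∀ f : ℕ → Lp ℝ 2 μ, (∀ n, f n ∈ dom) →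
    (∀ ε > 0, ∃ N, ∀ m ≥ N, ∀ n ≥ N,
      Q (f m - f n) (f m - f n) + ‖f m - f n‖ ^ 2 < ε) →
    ∃ g ∈ dom, Tendsto (fun n => Q (f n - g) (f n - g) + ‖f n - g‖ ^ 2) atTop (nhds 0)

/-- `G` is the resolvent family of the closed form `T`. -/
def WideForm.IsResolvent {μ : Measure X} (T : WideForm μ)
    (G : ℝ → Lp ℝ 2 μ →L[ℝ] Lp ℝ 2 μ) : Prop :=
  ∀ α > 0, ∀ u, G α u ∈ T.dom ∧
    ∀ v ∈ T.dom, T.Q (G α u) v + α * ⟪G α u, v⟫ = ⟪u, v⟫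

/-- `T` is positivity preserving. -/
def WideForm.PosPres {μ : Measure X} (T : WideForm μ) : Prop :=
  ∀ u ∈ T.dom, |u| ∈ T.dom ∧ T.Q |u| |u| ≤ T.Q u u

/-- The domain of the restriction of `T` to `B` with respect to the nest `𝒜`:
the form-norm closure of the union of the domains of the restrictions to `B ∩ 𝒜 n`. -/
def NestDom {μ : Measure X} (T : WideForm μ) (𝒜 : ℕ → Set X) (B : Set X) :
    Set (Lp ℝ 2 μ) :=
  {f | f ∈ T.dom ∧ ∃ g : ℕ → Lp ℝ 2 μ,
    (∀ k, g k ∈ T.dom ∧ ∃ n, indMul (B ∩ 𝒜 n) (g k) = g k) ∧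
    Tendsto (fun k => T.Q (g k - f) (g k - f) + ‖g k - f‖ ^ 2) atTop (nhds 0)}

/-- `C` is invariant for the restriction `Q^𝒜_B` (form characterization, valid for
positivity preserving forms). -/
def NestInvariant {μ : Measure X} (T : WideForm μ) (𝒜 : ℕ → Set X) (B C : Set X) : Prop :=
  MeasurableSet C ∧ ∀ f ∈ NestDom T 𝒜 B, indMul C f ∈ NestDom T 𝒜 B ∧
    T.Q f f = T.Q (indMul C f) (indMul C f) + T.Q (f - indMul C f) (f - indMul C f)

/-- `C` is a connected component of the restriction `Q^𝒜_B`: an invariant set of positive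
measure whose restriction is irreducible. -/
def NestComponent {μ : Measure X} (T : WideForm μ) (𝒜 : ℕ → Set X) (B C : Set X) : Prop :=
  NestInvariant T 𝒜 B C ∧ 0 < μ C ∧
    ∀ D : Set X, MeasurableSet D → D ⊆ C →
      (∀ f ∈ NestDom T 𝒜 B, indMul C f = f →
        (indMul D f ∈ NestDom T 𝒜 B ∧
          T.Q f f = T.Q (indMul D f) (indMul D f)
            + T.Q (f - indMul D f) (f - indMul D f))) →
      μ D = 0 ∨ μ (C \ D) = 0

section Helpers

variable {μ : Measure X}

lemma indMul_coeFn {A : Set X} (hA : MeasurableSet A) (f : Lp ℝ 2 μ) :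
    ⇑(indMul A f) =ᵐ[μ] A.indicator ⇑f := by
  rw [indMul, dif_pos hA]; exact MemLp.coeFn_toLp _

lemma indMul_add {A : Set X} (hA : MeasurableSet A) (f g : Lp ℝ 2 μ) :
    indMul A (f + g) = indMul A f + indMul A g := by
  refine Lp.ext ?_
  filter_upwards [indMul_coeFn hA (f+g), indMul_coeFn hA f, indMul_coeFn hA g,
    Lp.coeFn_add f g, Lp.coeFn_add (indMul A f) (indMul A g)] with x h1 h2 h3 h4 h5
  rw [h1, h5, Pi.add_apply, h2, h3]
  by_cases hx : x ∈ A
  · rw [Set.indicator_of_mem hx, Set.indicator_of_mem hx, Set.indicator_of_mem hx, h4,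
      Pi.add_apply]
  · rw [Set.indicator_of_notMem hx, Set.indicator_of_notMem hx, Set.indicator_of_notMem hx,
      add_zero]

lemma indMul_indMul {A B : Set X} (hA : MeasurableSet A) (hB : MeasurableSet B)
    (f : Lp ℝ 2 μ) : indMul A (indMul B f) = indMul (A ∩ B) f := by
  refine Lp.ext ?_
  filter_upwards [indMul_coeFn hA (indMul B f), indMul_coeFn hB f,
    indMul_coeFn (hA.inter hB) f] with x h1 h2 h3
  rw [h1, h3]
  by_cases hx : x ∈ A <;> by_cases hx' : x ∈ B <;>
    simp [Set.indicator_of_mem, Set.indicator_of_notMem, hx, hx', Set.mem_inter_iff, h2]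

lemma indMul_eq_zero {A : Set X} (hA : MeasurableSet A) (hμ : μ A = 0) (f : Lp ℝ 2 μ) :
    indMul A f = 0 := by
  refine Lp.ext ?_
  filter_upwards [indMul_coeFn hA f, Lp.coeFn_zero ℝ 2 μ,
    measure_eq_zero_iff_ae_notMem.mp hμ] with x h1 h2 h3
  simp only [h1, Set.indicator_of_notMem h3, h2, Pi.zero_apply]

lemma indMul_absorb {A A' : Set X} (hA' : MeasurableSet A') (hsub : A ⊆ A')
    (f : Lp ℝ 2 μ) (hf : indMul A f = f) : indMul A' f = f := by
  by_cases hA : MeasurableSet A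
  · conv_lhs => rw [← hf]
    rw [indMul_indMul hA' hA, Set.inter_eq_right.mpr hsub, hf]
  · rw [indMul, dif_neg hA] at hf; rw [← hf, indMul, dif_pos hA']
    refine Lp.ext ?_
    filter_upwards [MemLp.coeFn_toLp ((Lp.memLp (0 : Lp ℝ 2 μ)).indicator hA' :
        MemLp (A'.indicator ⇑(0 : Lp ℝ 2 μ)) 2 μ),
      Lp.coeFn_zero ℝ 2 μ] with x h1 h2
    rw [h1]
    by_cases hx : x ∈ A'
    · rw [Set.indicator_of_mem hx]
    · rw [Set.indicator_of_notMem hx, h2, Pi.zero_apply]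

lemma inner_eq_zero_of_ae {f g : Lp ℝ 2 μ} (h : (fun x => f x * g x) =ᵐ[μ] 0) :
    ⟪f, g⟫ = 0 := by
  rw [L2.inner_def]
  have : ∀ᵐ x ∂μ, ⟪f x, g x⟫ = (0 : X → ℝ) x := by
    filter_upwards [h] with x hx; simpa using (mul_eq_zero.mp hx).symm
  rw [integral_congr_ae this]; simp

lemma indMul_mul_ae_zero {A B : Set X} (hA : MeasurableSet A) (hB : MeasurableSet B)
    (hAB : μ (A ∩ B) = 0) (f g : Lp ℝ 2 μ) :
    (fun x => (indMul A f) x * (indMul B g) x) =ᵐ[μ] 0 := by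
  filter_upwards [indMul_coeFn hA f, indMul_coeFn hB g,
    measure_eq_zero_iff_ae_notMem.mp hAB] with x h1 h2 h3
  rw [h1, h2]
  by_cases hx : x ∈ A
  · have : x ∉ B := fun hx' => h3 ⟨hx, hx'⟩
    simp [Set.indicator_of_notMem this]
  · simp [Set.indicator_of_notMem hx]

lemma coeFn_finset_sum {ι : Type*} (s : Finset ι) (g : ι → Lp ℝ 2 μ) :
    ⇑(∑ i ∈ s, g i) =ᵐ[μ] fun x => ∑ i ∈ s, g i x := by
  classical
  induction s using Finset.induction_on with
  | empty => simp only [Finset.sum_empty]; exact Lp.coeFn_zero ℝ 2 μ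
  | insert a s' hni ih =>
    rw [Finset.sum_insert hni]
    filter_upwards [Lp.coeFn_add (g a) (∑ i ∈ s', g i), ih] with x h1 h2
    rw [h1, Pi.add_apply, h2]
    simp [Finset.sum_insert hni]

namespace WideForm
variable (T : WideForm μ)

lemma zero_left (v : Lp ℝ 2 μ) : T.Q 0 v = 0 := by
  have := T.smul_left 0 0 v; simpa using this

lemma add_right' (u v w : Lp ℝ 2 μ) : T.Q u (v + w) = T.Q u v + T.Q u w := by
  rw [T.symm, T.add_left, T.symm v u, T.symm w u]

lemma smul_right' (c : ℝ) (u v : Lp ℝ 2 μ) : T.Q u (c • v) = c * T.Q u v := by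
  rw [T.symm, T.smul_left, T.symm]

lemma neg_left (u v : Lp ℝ 2 μ) : T.Q (-u) v = - T.Q u v := by
  have := T.smul_left (-1) u v; simpa using this

lemma sub_left (u v w : Lp ℝ 2 μ) : T.Q (u - v) w = T.Q u w - T.Q v w := by
  rw [sub_eq_add_neg, T.add_left, T.neg_left, sub_eq_add_neg]

lemma sub_right (u v w : Lp ℝ 2 μ) : T.Q u (v - w) = T.Q u v - T.Q u w := by
  rw [T.symm, T.sub_left, T.symm v u, T.symm w u]

lemma expand_add (u v : Lp ℝ 2 μ) :
    T.Q (u + v) (u + v) = T.Q u u + 2 * T.Q u v + T.Q v v := by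
  rw [T.add_left, T.add_right', T.add_right', T.symm v u]; ring

lemma expand_sub (u v : Lp ℝ 2 μ) :
    T.Q (u - v) (u - v) = T.Q u u - 2 * T.Q u v + T.Q v v := by
  rw [T.sub_left, T.sub_right, T.sub_right, T.symm v u]; ring

lemma sq_add_le (u v : Lp ℝ 2 μ) :
    T.Q (u + v) (u + v) ≤ 2 * T.Q u u + 2 * T.Q v v := by
  have h := T.nonneg (u - v)
  rw [T.expand_sub] at h
  rw [T.expand_add]; linarith

lemma sum_left' {ι : Type*} (s : Finset ι) (g : ι → Lp ℝ 2 μ) (v : Lp ℝ 2 μ) :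
    T.Q (∑ i ∈ s, g i) v = ∑ i ∈ s, T.Q (g i) v := by
  classical
  induction s using Finset.induction_on with
  | empty => simpa using T.zero_left v
  | insert _ _ hni ih => rw [Finset.sum_insert hni, T.add_left, ih, Finset.sum_insert hni]

lemma sum_right' {ι : Type*} (s : Finset ι) (g : ι → Lp ℝ 2 μ) (v : Lp ℝ 2 μ) :
    T.Q v (∑ i ∈ s, g i) = ∑ i ∈ s, T.Q v (g i) := by
  rw [T.symm, T.sum_left']; exact Finset.sum_congr rfl fun i _ => T.symm _ _

lemma sum_sum {ι : Type*} (s : Finset ι) (a : ι → ℝ) (g : ι → Lp ℝ 2 μ) :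
    T.Q (∑ i ∈ s, a i • g i) (∑ j ∈ s, a j • g j)
      = ∑ i ∈ s, ∑ j ∈ s, a i * a j * T.Q (g i) (g j) := by
  rw [T.sum_left']
  refine Finset.sum_congr rfl fun i _ => ?_
  rw [T.smul_left, T.sum_right', Finset.mul_sum]
  refine Finset.sum_congr rfl fun j _ => ?_
  rw [T.smul_right']; ring

/-- Key sign lemma: for nonnegative, a.e.-disjointly supported `u, v` in the domain of a
positivity preserving form, `Q(u,v) ≤ 0`. -/
lemma q_nonpos_of_disjoint (hpp : T.PosPres) {u v : Lp ℝ 2 μ}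
    (hu : u ∈ T.dom) (hv : v ∈ T.dom)
    (hu0 : ∀ᵐ x ∂μ, 0 ≤ u x) (hv0 : ∀ᵐ x ∂μ, 0 ≤ v x)
    (huv : (fun x => u x * v x) =ᵐ[μ] 0) : T.Q u v ≤ 0 := by
  have habs : |u - v| = u + v := by
    refine Lp.ext ?_
    filter_upwards [Lp.coeFn_abs (u - v), Lp.coeFn_sub u v, Lp.coeFn_add u v,
      hu0, hv0, huv] with x h1 h2 h3 h4 h5 h6
    rw [h1, h2, Pi.sub_apply, h3, Pi.add_apply]
    rcases mul_eq_zero.mp h6 with h | h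
    · rw [h, zero_sub, abs_neg, zero_add, abs_of_nonneg h5]
    · rw [h, sub_zero, add_zero, abs_of_nonneg h4]
  have h2 := (hpp (u - v) (Submodule.sub_mem _ hu hv)).2
  rw [habs, T.expand_add, T.expand_sub] at h2
  linarith

end WideForm

lemma NestDom.add {T : WideForm μ} {𝒜 : ℕ → Set X} {B : Set X} (hmono : Monotone 𝒜)
    {u v : Lp ℝ 2 μ} (hu : u ∈ NestDom T 𝒜 B) (hv : v ∈ NestDom T 𝒜 B) :
    u + v ∈ NestDom T 𝒜 B := by
  obtain ⟨hud, gu, hgu, hcu⟩ := hu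
  obtain ⟨hvd, gv, hgv, hcv⟩ := hv
  have key : ∀ (n1 n2 : ℕ) (p q : Lp ℝ 2 μ), n1 ≤ n2 →
      indMul (B ∩ 𝒜 n1) p = p → indMul (B ∩ 𝒜 n2) q = q →
      ∃ n, indMul (B ∩ 𝒜 n) (p + q) = p + q := by
    intro n1 n2 p q hle h1 h2
    by_cases hm : MeasurableSet (B ∩ 𝒜 n2)
    · refine ⟨n2, ?_⟩
      rw [indMul_add hm,
        indMul_absorb hm (Set.inter_subset_inter_right _ (hmono hle)) _ h1, h2]
    · have hp0 : q = 0 := by rw [← h2, indMul, dif_neg hm]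
      refine ⟨n1, ?_⟩
      rw [hp0, add_zero, h1]
  refine ⟨T.dom.add_mem hud hvd, fun k => gu k + gv k,
    fun k => ⟨T.dom.add_mem (hgu k).1 (hgv k).1, ?_⟩, ?_⟩
  · obtain ⟨n1, h1⟩ := (hgu k).2
    obtain ⟨n2, h2⟩ := (hgv k).2
    rcases le_total n1 n2 with hle | hle
    · exact key n1 n2 _ _ hle h1 h2
    · obtain ⟨n, hn⟩ := key n2 n1 _ _ hle h2 h1
      exact ⟨n, by rwa [add_comm (gv k)] at hn⟩
  · have hbd : ∀ k, T.Q (gu k + gv k - (u + v)) (gu k + gv k - (u + v))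
        + ‖gu k + gv k - (u + v)‖ ^ 2
        ≤ 2 * (T.Q (gu k - u) (gu k - u) + ‖gu k - u‖ ^ 2)
          + 2 * (T.Q (gv k - v) (gv k - v) + ‖gv k - v‖ ^ 2) := by
      intro k
      have heq : gu k + gv k - (u + v) = (gu k - u) + (gv k - v) := by abel
      rw [heq]
      have h1 := T.sq_add_le (gu k - u) (gv k - v)
      have h2 : ‖(gu k - u) + (gv k - v)‖ ^ 2 ≤ 2 * ‖gu k - u‖ ^ 2 + 2 * ‖gv k - v‖ ^ 2 := by
        have h3 := norm_add_le (gu k - u) (gv k - v)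
        have h4 := norm_nonneg (gu k - u)
        have h5 := norm_nonneg (gv k - v)
        have h6 := norm_nonneg ((gu k - u) + (gv k - v))
        nlinarith [sq_nonneg (‖gu k - u‖ - ‖gv k - v‖), sq_nonneg (‖gu k - u‖ + ‖gv k - v‖),
          mul_self_le_mul_self h6 h3]
      linarith
    have h0 : ∀ k, 0 ≤ T.Q (gu k + gv k - (u + v)) (gu k + gv k - (u + v))
        + ‖gu k + gv k - (u + v)‖ ^ 2 := by
      intro k
      have := T.nonneg (gu k + gv k - (u + v))
      positivity
    exact squeeze_zero h0 hbd (by simpa using ((hcu.const_mul 2).add (hcv.const_mul 2)))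

/-- Quadratic upper bound from diagonal-dominance-type estimates. -/
lemma quadratic_bound {μ : Measure X} (T : WideForm μ) {l : ℕ}
    (e : Fin l → Lp ℝ 2 μ) (a : Fin l → ℝ) (lamn : ℝ)
    (hoff : ∀ i j, i ≠ j → T.Q (e i) (e j) ≤ 0)
    (hE : ∀ i, T.Q (e i) (e i) - ∑ j ∈ Finset.univ.erase i, T.Q (e i) (e j)
        ≤ lamn * ⟪e i, e i⟫) :
    T.Q (∑ i, a i • e i) (∑ i, a i • e i) ≤ lamn * ∑ i, a i ^ 2 * ⟪e i, e i⟫ := by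
  classical
  rw [T.sum_sum]
  set Q' : Fin l → Fin l → ℝ :=
    fun i j => if i = j then T.Q (e i) (e i) else -T.Q (e i) (e j) with hQ'def
  have hQ'symm : ∀ i j, Q' i j = Q' j i := by
    intro i j
    by_cases h : i = j
    · subst h; rfl
    · simp only [hQ'def, if_neg h, if_neg (Ne.symm h), T.symm (e i) (e j)]
  have hstep : ∀ i j, a i * a j * T.Q (e i) (e j)
      ≤ a i ^ 2 / 2 * Q' i j + a j ^ 2 / 2 * Q' i j := by
    intro i j
    by_cases h : i = j
    · subst h
      simp only [hQ'def, if_pos rfl]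
      have := T.nonneg (e i)
      nlinarith [sq_nonneg (a i)]
    · simp only [hQ'def, if_neg h]
      have h1 : T.Q (e i) (e j) ≤ 0 := hoff i j h
      nlinarith [sq_nonneg (a i + a j), sq_nonneg (a i - a j)]
  have hsum1 : ∑ i, ∑ j, a i * a j * T.Q (e i) (e j)
      ≤ ∑ i, ∑ j, (a i ^ 2 / 2 * Q' i j + a j ^ 2 / 2 * Q' i j) :=
    Finset.sum_le_sum fun i _ => Finset.sum_le_sum fun j _ => hstep i j
  have hsum2 : ∑ i, ∑ j, (a i ^ 2 / 2 * Q' i j + a j ^ 2 / 2 * Q' i j)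
      = ∑ i, a i ^ 2 * ∑ j, Q' i j := by
    have hswap : ∑ i, ∑ j, a j ^ 2 / 2 * Q' i j = ∑ i, ∑ j, a i ^ 2 / 2 * Q' i j := by
      rw [Finset.sum_comm]
      exact Finset.sum_congr rfl fun i _ => Finset.sum_congr rfl fun j _ => by
        rw [hQ'symm j i]
    simp only [Finset.sum_add_distrib]
    rw [hswap, ← Finset.sum_add_distrib]
    refine Finset.sum_congr rfl fun i _ => ?_
    rw [← Finset.sum_add_distrib, Finset.mul_sum]
    exact Finset.sum_congr rfl fun j _ => by ring
  have hsum3 : ∀ i, ∑ j, Q' i j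
      = T.Q (e i) (e i) - ∑ j ∈ Finset.univ.erase i, T.Q (e i) (e j) := by
    intro i
    rw [← Finset.add_sum_erase _ _ (Finset.mem_univ i)]
    simp only [hQ'def, if_pos rfl]
    rw [sub_eq_add_neg, ← Finset.sum_neg_distrib]
    congr 1
    exact Finset.sum_congr rfl fun j hj => by
      rw [if_neg fun h => (Finset.ne_of_mem_erase hj) h.symm]
  have hsum4 : ∑ i, a i ^ 2 * ∑ j, Q' i j ≤ ∑ i, a i ^ 2 * (lamn * ⟪e i, e i⟫) :=
    Finset.sum_le_sum fun i _ =>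
      mul_le_mul_of_nonneg_left (by rw [hsum3 i]; exact hE i) (sq_nonneg _)
  have hsum5 : ∑ i, a i ^ 2 * (lamn * ⟪e i, e i⟫)
      = lamn * ∑ i, a i ^ 2 * ⟪e i, e i⟫ := by
    rw [Finset.mul_sum]
    exact Finset.sum_congr rfl fun i _ => by ring
  linarith

/-- The variational (min-max) lower bound: if `v ∈ D(Q)` is orthogonal to the first `N0`
eigenfunctions then `Q(v) ≥ λ_{N0+1} ‖v‖²`. -/
lemma variational_bound {μ : Measure X} (T : WideForm μ)
    (lam : ℕ → ℝ) (ef : ℕ → Lp ℝ 2 μ)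
    (hmono : ∀ i j, 1 ≤ i → i ≤ j → lam i ≤ lam j)
    (horth : Orthonormal ℝ (fun i : ℕ => ef (i + 1)))
    (hbasis : (Submodule.span ℝ (Set.range fun i : ℕ => ef (i + 1))).topologicalClosure = ⊤)
    (heigs : ∀ i, 1 ≤ i → ef i ∈ T.dom ∧ ∀ v ∈ T.dom, T.Q (ef i) v = lam i * ⟪ef i, v⟫)
    (N0 : ℕ) (v : Lp ℝ 2 μ) (hvdom : v ∈ T.dom)
    (ho : ∀ m : ℕ, m < N0 → ⟪v, ef (m + 1)⟫ = 0) :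
    lam (N0 + 1) * ⟪v, v⟫ ≤ T.Q v v := by
  classical
  set c : ℕ → ℝ := fun i => ⟪v, ef (i + 1)⟫ with hcdef
  obtain ⟨hb, hbcoe⟩ : ∃ hb : HilbertBasis ℕ ℝ (Lp ℝ 2 μ), ⇑hb = fun i : ℕ => ef (i + 1) :=
    ⟨HilbertBasis.mk horth (le_of_eq hbasis.symm), HilbertBasis.coe_mk _ _⟩
  have hhs : HasSum (fun i => c i * c i) ⟪v, v⟫ := by
    have h := hb.hasSum_inner_mul_inner v v
    rw [hbcoe] at h
    refine h.congr_fun fun i => ?_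
    simp only [hcdef, real_inner_comm v]
  have hsN : Tendsto (fun N => ∑ i ∈ Finset.range N, c i * c i) atTop (nhds ⟪v, v⟫) :=
    hhs.tendsto_sum_nat
  have hQlower : ∀ N, lam (N0 + 1) * ∑ i ∈ Finset.range N, c i * c i ≤ T.Q v v := by
    intro N
    set w : Lp ℝ 2 μ := ∑ i ∈ Finset.range N, c i • ef (i + 1) with hwdef
    have hQvw : T.Q v w = ∑ i ∈ Finset.range N, lam (i + 1) * (c i * c i) := by
      rw [hwdef, T.sum_right']
      refine Finset.sum_congr rfl fun i _ => ?_
      rw [T.smul_right', T.symm, (heigs (i + 1) (by omega)).2 v hvdom]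
      simp only [hcdef, real_inner_comm v]
      ring
    have hQww : T.Q w w = ∑ i ∈ Finset.range N, lam (i + 1) * (c i * c i) := by
      rw [hwdef, T.sum_sum]
      refine Finset.sum_congr rfl fun i hi => ?_
      have hrow : ∀ j ∈ Finset.range N, c i * c j * T.Q (ef (i + 1)) (ef (j + 1))
          = if i = j then lam (i + 1) * (c i * c i) else 0 := by
        intro j _
        rw [(heigs (i + 1) (by omega)).2 (ef (j + 1)) (heigs (j + 1) (by omega)).1]
        have := orthonormal_iff_ite.mp horth i j
        rw [this]
        by_cases h : i = j
        · subst h; simp; ring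
        · simp [h]
      rw [Finset.sum_congr rfl hrow, Finset.sum_ite_eq (Finset.range N) i
        (fun _ => lam (i + 1) * (c i * c i)), if_pos hi]
    have h0 := T.nonneg (v - w)
    rw [T.expand_sub, hQvw, hQww] at h0
    have hterm : ∀ i ∈ Finset.range N,
        lam (N0 + 1) * (c i * c i) ≤ lam (i + 1) * (c i * c i) := by
      intro i _
      by_cases hci : c i = 0
      · rw [hci]; simp
      · have hige : N0 + 1 ≤ i + 1 := by
          by_contra hlt'; push_neg at hlt'
          exact hci (ho i (by omega))
        have hml := hmono (N0 + 1) (i + 1) (by omega) hige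
        nlinarith [mul_self_nonneg (c i)]
    calc lam (N0 + 1) * ∑ i ∈ Finset.range N, c i * c i
        = ∑ i ∈ Finset.range N, lam (N0 + 1) * (c i * c i) := by
          rw [Finset.mul_sum]
      _ ≤ ∑ i ∈ Finset.range N, lam (i + 1) * (c i * c i) := Finset.sum_le_sum hterm
      _ ≤ T.Q v v := by linarith
  exact le_of_tendsto (hsN.const_mul (lam (N0 + 1))) (Eventually.of_forall hQlower)

set_option maxHeartbeats 1000000 in
/-- Courant nodal domain theorem for positivity preserving forms:
an eigenfunction for the `n`-th eigenvalue `λₙ` (counted with multiplicity, indexed from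
`1`) of multiplicity `k`, whose positive and negative parts lie in the nest-restricted
domains, has at most `n + k - 1` `(Q,𝒜)`-nodal domains. -/
theorem courant_nodal_domain_theorem {μ : Measure X} (T : WideForm μ)
    (hpp : T.PosPres) (hdense : Dense (T.dom : Set (Lp ℝ 2 μ)))
    (G : ℝ → Lp ℝ 2 μ →L[ℝ] Lp ℝ 2 μ) (hG : T.IsResolvent G)
    (hcpt : ∀ α > 0, IsCompactOperator (G α))
    (lam : ℕ → ℝ) (ef : ℕ → Lp ℝ 2 μ)
    (hmono : ∀ i j, 1 ≤ i → i ≤ j → lam i ≤ lam j)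
    (horth : Orthonormal ℝ (fun i : ℕ => ef (i + 1)))
    (hbasis : (Submodule.span ℝ (Set.range fun i : ℕ => ef (i + 1))).topologicalClosure = ⊤)
    (heigs : ∀ i, 1 ≤ i → ef i ∈ T.dom ∧ ∀ v ∈ T.dom, T.Q (ef i) v = lam i * ⟪ef i, v⟫)
    (n k : ℕ) (hn : 1 ≤ n) (hk : 1 ≤ k)
    (hmult : ∃ a, 1 ≤ a ∧ a ≤ n ∧ n < a + k ∧
      ∀ i, 1 ≤ i → (lam i = lam n ↔ a ≤ i ∧ i < a + k))
    (f : Lp ℝ 2 μ) (hf : f ∈ T.dom) (hf0 : f ≠ 0)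
    (heig : ∀ v ∈ T.dom, T.Q f v = lam n * ⟪f, v⟫)
    (𝒜 : ℕ → Set X) (hmonoA : Monotone 𝒜) (hmeas : ∀ m, MeasurableSet (𝒜 m))
    (hfp : f ⊔ 0 ∈ NestDom T 𝒜 {x | 0 < (f : X → ℝ) x})
    (hfm : (-f) ⊔ 0 ∈ NestDom T 𝒜 {x | (f : X → ℝ) x < 0})
    (l : ℕ) (C : Fin l → Set X)
    (hC : ∀ i,
      (NestComponent T 𝒜 {x | 0 < (f : X → ℝ) x} (C i) ∧
        μ (C i \ {x | 0 < (f : X → ℝ) x}) = 0) ∨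
      (NestComponent T 𝒜 {x | (f : X → ℝ) x < 0} (C i) ∧
        μ (C i \ {x | (f : X → ℝ) x < 0}) = 0))
    (hdisj : ∀ i j, i ≠ j → μ (C i ∩ C j) = 0) :
    l ≤ n + k - 1 := by
  classical
  by_contra hcon
  push_neg at hcon
  -- notation
  set Fp : Set X := {x | 0 < (f : X → ℝ) x} with hFpdef
  set Fm : Set X := {x | (f : X → ℝ) x < 0} with hFmdef
  set fp : Lp ℝ 2 μ := f ⊔ 0 with hfpdef
  set fm : Lp ℝ 2 μ := (-f) ⊔ 0 with hfmdef
  have hae_fp : ⇑fp =ᵐ[μ] fun x => max (f x) 0 := by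
    filter_upwards [Lp.coeFn_sup f 0, Lp.coeFn_zero ℝ 2 μ] with x h1 h2
    simp only [hfpdef, h1, Pi.sup_apply, h2, Pi.zero_apply]
  have hae_fm : ⇑fm =ᵐ[μ] fun x => max (-f x) 0 := by
    filter_upwards [Lp.coeFn_sup (-f) 0, Lp.coeFn_zero ℝ 2 μ, Lp.coeFn_neg f] with x h1 h2 h3
    simp only [hfmdef, h1, Pi.sup_apply, h2, Pi.zero_apply, h3, Pi.neg_apply]
  have hsplit : fp - fm = f := by
    refine Lp.ext ?_
    filter_upwards [Lp.coeFn_sub fp fm, hae_fp, hae_fm] with x h1 h2 h3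
    rw [h1, Pi.sub_apply, h2, h3]
    rcases le_total (f x) 0 with h | h
    · rw [max_eq_right h, max_eq_left (by linarith : (0:ℝ) ≤ -f x)]; ring
    · rw [max_eq_left h, max_eq_right (by linarith : -f x ≤ (0:ℝ))]; ring
  set P : Fin l → Prop := fun i => NestComponent T 𝒜 Fp (C i) ∧ μ (C i \ Fp) = 0 with hPdef
  have hPneg : ∀ i, ¬ P i → NestComponent T 𝒜 Fm (C i) ∧ μ (C i \ Fm) = 0 :=
    fun i hi => (hC i).resolve_left hi
  set Bs : Fin l → Set X := fun i => if P i then Fp else Fm with hBsdef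
  set φ : Fin l → Lp ℝ 2 μ := fun i => if P i then fp else fm with hφdef
  set s : Fin l → ℝ := fun i => if P i then 1 else -1 with hsdef
  have hcomp : ∀ i, NestComponent T 𝒜 (Bs i) (C i) := by
    intro i; by_cases h : P i
    · simp only [hBsdef, if_pos h]; exact h.1
    · simp only [hBsdef, if_neg h]; exact (hPneg i h).1
  have hnull : ∀ i, μ (C i \ Bs i) = 0 := by
    intro i; by_cases h : P i
    · simp only [hBsdef, if_pos h]; exact h.2
    · simp only [hBsdef, if_neg h]; exact (hPneg i h).2
  have hφmem : ∀ i, φ i ∈ NestDom T 𝒜 (Bs i) := by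
    intro i; by_cases h : P i
    · simp only [hφdef, hBsdef, if_pos h]; exact hfp
    · simp only [hφdef, hBsdef, if_neg h]; exact hfm
  have hCmeas : ∀ i, MeasurableSet (C i) := fun i => (hcomp i).1.1
  set e : Fin l → Lp ℝ 2 μ := fun i => indMul (C i) (φ i) with hedef'
  have hedef : ∀ i, e i = indMul (C i) (φ i) := fun i => rfl
  have heNest : ∀ i, e i ∈ NestDom T 𝒜 (Bs i) := fun i =>
    ((hcomp i).1.2 (φ i) (hφmem i)).1
  have hedom : ∀ i, e i ∈ T.dom := fun i => (heNest i).1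
  have hφdom : ∀ i, φ i ∈ T.dom := fun i => (hφmem i).1
  have hA : ∀ i, T.Q (e i) (φ i) = T.Q (e i) (e i) := by
    intro i
    have h := ((hcomp i).1.2 (φ i) (hφmem i)).2
    rw [T.expand_sub] at h
    have hsym := T.symm (e i) (φ i)
    linarith
  -- a.e. facts
  have hae_e : ∀ i, ⇑(e i) =ᵐ[μ] (C i).indicator ⇑(φ i) := fun i => indMul_coeFn (hCmeas i) _
  have hae_CB : ∀ i, ∀ᵐ x ∂μ, x ∈ C i → x ∈ Bs i := by
    intro i
    filter_upwards [measure_eq_zero_iff_ae_notMem.mp (hnull i)] with x hx hxC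
    by_contra h; exact hx ⟨hxC, h⟩
  have hae_φ : ∀ i, ∀ᵐ x ∂μ,
      0 ≤ φ i x ∧ (x ∈ Bs i → f x = s i * φ i x ∧ 0 < φ i x) := by
    intro i; by_cases h : P i
    · simp only [hφdef, hBsdef, hsdef, if_pos h]
      filter_upwards [hae_fp] with x h1
      rw [h1]
      refine ⟨le_max_right _ _, fun hx => ?_⟩
      have hgt : (0:ℝ) < f x := hx
      rw [max_eq_left hgt.le]
      exact ⟨(one_mul _).symm, hgt⟩
    · simp only [hφdef, hBsdef, hsdef, if_neg h]
      filter_upwards [hae_fm] with x h1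
      rw [h1]
      refine ⟨le_max_right _ _, fun hx => ?_⟩
      have hlt : f x < 0 := hx
      rw [max_eq_left (by linarith : (0:ℝ) ≤ -f x)]
      constructor
      · ring
      · linarith
  have hae_e_nonneg : ∀ i, ∀ᵐ x ∂μ, 0 ≤ e i x := by
    intro i; filter_upwards [hae_e i, hae_φ i] with x h1 h2
    rw [h1]; by_cases hx : x ∈ C i
    · rw [Set.indicator_of_mem hx]; exact h2.1
    · rw [Set.indicator_of_notMem hx]
  have hae_supp : ∀ i, ∀ᵐ x ∂μ, e i x ≠ 0 →
      x ∈ C i ∧ x ∈ Bs i ∧ f x = s i * e i x := by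
    intro i
    filter_upwards [hae_e i, hae_CB i, hae_φ i] with x h1 h2 h3 hne
    by_cases hx : x ∈ C i
    · have hB := h2 hx
      have hval : e i x = φ i x := by rw [h1, Set.indicator_of_mem hx]
      exact ⟨hx, hB, by rw [hval]; exact (h3.2 hB).1⟩
    · exact absurd (by rw [h1, Set.indicator_of_notMem hx]) hne
  have hprod : ∀ i j, i ≠ j → (fun x => e i x * e j x) =ᵐ[μ] 0 := by
    intro i j hij
    have := indMul_mul_ae_zero (hCmeas i) (hCmeas j) (hdisj i j hij) (φ i) (φ j)
    simpa only [← hedef] using this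
  have hQij_le : ∀ i j, i ≠ j → T.Q (e i) (e j) ≤ 0 := fun i j hij =>
    T.q_nonpos_of_disjoint hpp (hedom i) (hedom j) (hae_e_nonneg i) (hae_e_nonneg j)
      (hprod i j hij)
  have hQij_zero : ∀ i j, i ≠ j → (P i ↔ P j) → T.Q (e i) (e j) = 0 := by
    intro i j hij hiff
    have hBeq : Bs j = Bs i := by
      by_cases h : P i
      · simp only [hBsdef, if_pos h, if_pos (hiff.mp h)]
      · simp only [hBsdef, if_neg h, if_neg (fun hj => h (hiff.mpr hj))]
    have hsum : e i + e j ∈ NestDom T 𝒜 (Bs i) :=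
      NestDom.add hmonoA (heNest i) (hBeq ▸ heNest j)
    have hind : indMul (C i) (e i + e j) = e i := by
      rw [hedef i, hedef j, indMul_add (hCmeas i),
        indMul_indMul (hCmeas i) (hCmeas i), Set.inter_self,
        indMul_indMul (hCmeas i) (hCmeas j),
        indMul_eq_zero ((hCmeas i).inter (hCmeas j)) (hdisj i j hij), add_zero]
    have h := ((hcomp i).1.2 _ hsum).2
    rw [hind, add_sub_cancel_left, T.expand_add] at h
    linarith
  have hinner0 : ∀ i j, i ≠ j → ⟪e i, e j⟫ = 0 := fun i j hij =>
    inner_eq_zero_of_ae (hprod i j hij)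
  have hinner_f : ∀ i, ⟪f, e i⟫ = s i * ⟪e i, e i⟫ := by
    intro i
    have h0 : ⟪f - s i • e i, e i⟫ = 0 := by
      refine inner_eq_zero_of_ae ?_
      filter_upwards [Lp.coeFn_sub f (s i • e i), Lp.coeFn_smul (s i) (e i), hae_supp i]
        with x h1 h2 h3
      simp only [Pi.zero_apply]
      by_cases hx : e i x = 0
      · rw [hx, mul_zero]
      · obtain ⟨_, _, hfx⟩ := h3 hx
        rw [h1, Pi.sub_apply, h2, Pi.smul_apply, smul_eq_mul, hfx]; ring
    rw [inner_sub_left, real_inner_smul_left] at h0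
    linarith
  have hepos : ∀ i, 0 < ⟪e i, e i⟫ := by
    intro i
    have hne : e i ≠ 0 := by
      intro h0
      have hz : ⇑(e i) =ᵐ[μ] 0 := h0 ▸ Lp.coeFn_zero ℝ 2 μ
      have hnm : ∀ᵐ x ∂μ, x ∉ C i := by
        filter_upwards [hz, hae_e i, hae_CB i, hae_φ i] with x h1 h2 h3 h4 hxC
        rw [h2, Set.indicator_of_mem hxC] at h1
        exact absurd h1 (ne_of_gt (h4.2 (h3 hxC)).2)
      exact absurd (measure_eq_zero_iff_ae_notMem.mpr hnm) (ne_of_gt (hcomp i).2.1)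
    exact lt_of_le_of_ne real_inner_self_nonneg
      (fun h => hne (inner_self_eq_zero.mp h.symm))
  -- remainders
  set Ppos : Finset (Fin l) := Finset.univ.filter P with hPposdef
  set Pneg : Finset (Fin l) := Finset.univ.filter (fun i => ¬ P i) with hPnegdef
  set rp : Lp ℝ 2 μ := fp - ∑ j ∈ Ppos, e j with hrpdef
  set rm : Lp ℝ 2 μ := fm - ∑ j ∈ Pneg, e j with hrmdef
  have hrpdom : rp ∈ T.dom :=
    Submodule.sub_mem _ hfp.1 (Submodule.sum_mem _ fun j _ => hedom j)
  have hrmdom : rm ∈ T.dom :=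
    Submodule.sub_mem _ hfm.1 (Submodule.sum_mem _ fun j _ => hedom j)
  have hrsplit : f = (rp - rm) + ∑ j, s j • e j := by
    have hsum1 : ∑ j ∈ Ppos, s j • e j = ∑ j ∈ Ppos, e j :=
      Finset.sum_congr rfl fun j hj => by
        rw [hsdef]; simp only [if_pos (Finset.mem_filter.mp hj).2, one_smul]
    have hsum2 : ∑ j ∈ Pneg, s j • e j = -∑ j ∈ Pneg, e j := by
      rw [← Finset.sum_neg_distrib]
      exact Finset.sum_congr rfl fun j hj => by
        rw [hsdef]; simp only [if_neg (Finset.mem_filter.mp hj).2, neg_one_smul]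
    have hsplit2 : ∑ j, s j • e j = ∑ j ∈ Ppos, e j - ∑ j ∈ Pneg, e j := by
      rw [← Finset.sum_filter_add_sum_filter_not Finset.univ P (fun j => s j • e j)]
      rw [← hPposdef, ← hPnegdef, hsum1, hsum2, sub_eq_add_neg]
    rw [hsplit2, hrpdef, hrmdef, ← hsplit]; abel
  have hdisj_ae : ∀ᵐ x ∂μ, ∀ i j : Fin l, i ≠ j → ¬(x ∈ C i ∧ x ∈ C j) := by
    rw [ae_all_iff]; intro i; rw [ae_all_iff]; intro j
    by_cases hij : i = j
    · exact Eventually.of_forall fun x h => absurd hij h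
    · filter_upwards [measure_eq_zero_iff_ae_notMem.mp (hdisj i j hij)] with x hx _
      exact hx
  have hall_e : ∀ᵐ x ∂μ, ∀ j : Fin l, e j x = (C j).indicator (⇑(φ j)) x :=
    ae_all_iff.mpr hae_e
  have hall_φ : ∀ᵐ x ∂μ, ∀ j : Fin l,
      0 ≤ φ j x ∧ (x ∈ Bs j → f x = s j * φ j x ∧ 0 < φ j x) := ae_all_iff.mpr hae_φ
  have hae_rp : ∀ᵐ x ∂μ, 0 ≤ rp x ∧ (rp x ≠ 0 → 0 < f x) := by
    filter_upwards [Lp.coeFn_sub fp (∑ j ∈ Ppos, e j), coeFn_finset_sum Ppos e,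
      hall_e, hdisj_ae, hae_fp] with x h1 h2 h3 h4 h6
    have hrx : rp x = max (f x) 0 - ∑ j ∈ Ppos, e j x := by
      rw [hrpdef, h1, Pi.sub_apply, h2, h6]
    by_cases hx : ∃ j ∈ Ppos, x ∈ C j
    · obtain ⟨j0, hj0, hxj0⟩ := hx
      have hφj0 : ⇑(φ j0) x = max (f x) 0 := by
        rw [hφdef]; simp only [if_pos (Finset.mem_filter.mp hj0).2]; exact h6
      have hval : ∀ j ∈ Ppos, e j x = if j = j0 then max (f x) 0 else 0 := by
        intro j hj
        rw [h3 j]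
        by_cases hjj : j = j0
        · subst hjj; rw [Set.indicator_of_mem hxj0, if_pos rfl, hφj0]
        · have : x ∉ C j := fun hxj => h4 j j0 hjj ⟨hxj, hxj0⟩
          rw [Set.indicator_of_notMem this, if_neg hjj]
      rw [hrx, Finset.sum_congr rfl hval, Finset.sum_ite_eq' Ppos j0
        (fun _ => max (f x) 0), if_pos hj0, sub_self]
      exact ⟨le_refl 0, fun h => absurd rfl h⟩
    · push_neg at hx
      have hval : ∀ j ∈ Ppos, e j x = 0 := fun j hj => by
        rw [h3 j, Set.indicator_of_notMem (hx j hj)]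
      rw [hrx, Finset.sum_eq_zero hval, sub_zero]
      refine ⟨le_max_right _ _, fun hne => ?_⟩
      rcases le_or_gt (f x) 0 with h | h
      · exact absurd (max_eq_right h) hne
      · exact h
  have hae_rm : ∀ᵐ x ∂μ, 0 ≤ rm x ∧ (rm x ≠ 0 → f x < 0) := by
    filter_upwards [Lp.coeFn_sub fm (∑ j ∈ Pneg, e j), coeFn_finset_sum Pneg e,
      hall_e, hdisj_ae, hae_fm] with x h1 h2 h3 h4 h6
    have hrx : rm x = max (-f x) 0 - ∑ j ∈ Pneg, e j x := by
      rw [hrmdef, h1, Pi.sub_apply, h2, h6]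
    by_cases hx : ∃ j ∈ Pneg, x ∈ C j
    · obtain ⟨j0, hj0, hxj0⟩ := hx
      have hφj0 : ⇑(φ j0) x = max (-f x) 0 := by
        rw [hφdef]; simp only [if_neg (Finset.mem_filter.mp hj0).2]; exact h6
      have hval : ∀ j ∈ Pneg, e j x = if j = j0 then max (-f x) 0 else 0 := by
        intro j hj
        rw [h3 j]
        by_cases hjj : j = j0
        · subst hjj; rw [Set.indicator_of_mem hxj0, if_pos rfl, hφj0]
        · have : x ∉ C j := fun hxj => h4 j j0 hjj ⟨hxj, hxj0⟩
          rw [Set.indicator_of_notMem this, if_neg hjj]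
      rw [hrx, Finset.sum_congr rfl hval, Finset.sum_ite_eq' Pneg j0
        (fun _ => max (-f x) 0), if_pos hj0, sub_self]
      exact ⟨le_refl 0, fun h => absurd rfl h⟩
    · push_neg at hx
      have hval : ∀ j ∈ Pneg, e j x = 0 := fun j hj => by
        rw [h3 j, Set.indicator_of_notMem (hx j hj)]
      rw [hrx, Finset.sum_eq_zero hval, sub_zero]
      refine ⟨le_max_right _ _, fun hne => ?_⟩
      rcases le_or_gt 0 (f x) with h | h
      · exact absurd (max_eq_right (by linarith : -f x ≤ 0)) hne
      · exact h
  have hprod_rm : ∀ i, P i → (fun x => e i x * rm x) =ᵐ[μ] 0 := by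
    intro i hPi
    filter_upwards [hae_supp i, hae_rm] with x h1 h2
    simp only [Pi.zero_apply]
    by_cases hx : e i x = 0
    · rw [hx, zero_mul]
    · by_cases hr : rm x = 0
      · rw [hr, mul_zero]
      · exfalso
        obtain ⟨_, hxB, _⟩ := h1 hx
        rw [hBsdef] at hxB
        simp only [if_pos hPi] at hxB
        have hgt : 0 < f x := hxB
        exact absurd (h2.2 hr) (by linarith)
  have hprod_rp : ∀ i, ¬ P i → (fun x => e i x * rp x) =ᵐ[μ] 0 := by
    intro i hPi
    filter_upwards [hae_supp i, hae_rp] with x h1 h2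
    simp only [Pi.zero_apply]
    by_cases hx : e i x = 0
    · rw [hx, zero_mul]
    · by_cases hr : rp x = 0
      · rw [hr, mul_zero]
      · exfalso
        obtain ⟨_, hxB, _⟩ := h1 hx
        rw [hBsdef] at hxB
        simp only [if_neg hPi] at hxB
        have hlt : f x < 0 := hxB
        exact absurd (h2.2 hr) (by linarith)
  -- the key inequality
  have hE : ∀ i, T.Q (e i) (e i) - ∑ j ∈ Finset.univ.erase i, T.Q (e i) (e j)
      ≤ lam n * ⟪e i, e i⟫ := by
    intro i
    have hQf : T.Q (e i) f = lam n * (s i * ⟪e i, e i⟫) := by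
      rw [T.symm, heig (e i) (hedom i), hinner_f i]
    have hdec : T.Q (e i) f = T.Q (e i) rp - T.Q (e i) rm
        + ∑ j, s j * T.Q (e i) (e j) := by
      conv_lhs => rw [hrsplit]
      rw [T.add_right', T.sub_right, T.sum_right']
      congr 1
      exact Finset.sum_congr rfl fun j _ => T.smul_right' _ _ _
    by_cases hPi : P i
    · have hiP : i ∈ Ppos := Finset.mem_filter.mpr ⟨Finset.mem_univ _, hPi⟩
      have hsi : s i = 1 := by rw [hsdef]; exact if_pos hPi
      have hrp0 : T.Q (e i) rp = 0 := by
        have hphi : φ i = fp := by rw [hφdef]; exact if_pos hPi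
        rw [hrpdef, T.sub_right, T.sum_right', ← Finset.add_sum_erase _ _ hiP]
        have hz : ∀ j ∈ Ppos.erase i, T.Q (e i) (e j) = 0 := by
          intro j hj
          have hji : j ≠ i := Finset.ne_of_mem_erase hj
          have hPj := (Finset.mem_filter.mp (Finset.mem_of_mem_erase hj)).2
          exact hQij_zero i j (Ne.symm hji) (iff_of_true hPi hPj)
        rw [Finset.sum_eq_zero hz, add_zero, ← hphi, hA i, sub_self]
      have hrm0 : T.Q (e i) rm ≤ 0 :=
        T.q_nonpos_of_disjoint hpp (hedom i) hrmdom (hae_e_nonneg i)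
          (hae_rm.mono fun x h => h.1) (hprod_rm i hPi)
      have hsum_split : ∑ j, s j * T.Q (e i) (e j)
          = T.Q (e i) (e i) - ∑ j ∈ Finset.univ.erase i, T.Q (e i) (e j) := by
        rw [← Finset.add_sum_erase _ _ (Finset.mem_univ i), hsi, one_mul]
        have : ∀ j ∈ Finset.univ.erase i, s j * T.Q (e i) (e j) = -T.Q (e i) (e j) := by
          intro j hj
          have hji : j ≠ i := Finset.ne_of_mem_erase hj
          by_cases hPj : P j
          · rw [hQij_zero i j (Ne.symm hji) (iff_of_true hPi hPj)]; ring
          · rw [hsdef]; simp only [if_neg hPj]; ring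
        rw [Finset.sum_congr rfl this, Finset.sum_neg_distrib, ← sub_eq_add_neg]
      rw [hsi, one_mul] at hQf
      linarith [hQf, hdec, hrp0, hrm0, hsum_split]
    · have hiN : i ∈ Pneg := Finset.mem_filter.mpr ⟨Finset.mem_univ _, hPi⟩
      have hsi : s i = -1 := by rw [hsdef]; exact if_neg hPi
      have hrm0 : T.Q (e i) rm = 0 := by
        have hphi : φ i = fm := by rw [hφdef]; exact if_neg hPi
        rw [hrmdef, T.sub_right, T.sum_right', ← Finset.add_sum_erase _ _ hiN]
        have hz : ∀ j ∈ Pneg.erase i, T.Q (e i) (e j) = 0 := by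
          intro j hj
          have hji : j ≠ i := Finset.ne_of_mem_erase hj
          have hPj := (Finset.mem_filter.mp (Finset.mem_of_mem_erase hj)).2
          exact hQij_zero i j (Ne.symm hji) (iff_of_false hPi hPj)
        rw [Finset.sum_eq_zero hz, add_zero, ← hphi, hA i, sub_self]
      have hrp0 : T.Q (e i) rp ≤ 0 :=
        T.q_nonpos_of_disjoint hpp (hedom i) hrpdom (hae_e_nonneg i)
          (hae_rp.mono fun x h => h.1) (hprod_rp i hPi)
      have hsum_split : ∑ j, s j * T.Q (e i) (e j)
          = -T.Q (e i) (e i) + ∑ j ∈ Finset.univ.erase i, T.Q (e i) (e j) := by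
        rw [← Finset.add_sum_erase _ _ (Finset.mem_univ i), hsi]
        have : ∀ j ∈ Finset.univ.erase i, s j * T.Q (e i) (e j) = T.Q (e i) (e j) := by
          intro j hj
          have hji : j ≠ i := Finset.ne_of_mem_erase hj
          by_cases hPj : P j
          · rw [hsdef]; simp only [if_pos hPj]; ring
          · rw [hQij_zero i j (Ne.symm hji) (iff_of_false hPi hPj)]; ring
        rw [Finset.sum_congr rfl this]; ring
      rw [hsi] at hQf
      have hQf' : T.Q (e i) f = -(lam n * ⟪e i, e i⟫) := by rw [hQf]; ring
      linarith [hQf', hdec, hrp0, hrm0, hsum_split]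
  -- choose nontrivial coefficients orthogonal to the first n+k-1 eigenfunctions
  have hlt : n + k - 1 < l := hcon
  obtain ⟨a, ha0, hLa⟩ : ∃ a : Fin l → ℝ, a ≠ 0 ∧
      ∀ m : Fin (n + k - 1), ∑ i, a i * ⟪e i, ef ((m : ℕ) + 1)⟫ = 0 := by
    let L : (Fin l → ℝ) →ₗ[ℝ] (Fin (n + k - 1) → ℝ) :=
      { toFun := fun a m => ∑ i, a i * ⟪e i, ef ((m : ℕ) + 1)⟫
        map_add' := by
          intro a b; funext m
          simp only [Pi.add_apply, add_mul, Finset.sum_add_distrib]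
        map_smul' := by
          intro c a; funext m
          simp only [Pi.smul_apply, smul_eq_mul, RingHom.id_apply, Finset.mul_sum, mul_assoc] }
    have hninj : ¬ Function.Injective L := by
      intro hinj
      have hle := LinearMap.finrank_le_finrank_of_injective hinj
      simp only [Module.finrank_pi, Fintype.card_fin] at hle
      omega
    rw [Function.not_injective_iff] at hninj
    obtain ⟨x, y, hxy, hne⟩ := hninj
    refine ⟨x - y, sub_ne_zero.mpr hne, fun m => ?_⟩
    have : L (x - y) = 0 := by rw [map_sub, hxy, sub_self]
    have := congrFun this m
    simpa [L, sub_mul, Finset.sum_sub_distrib] using this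
  have hvdom : (∑ i, a i • e i) ∈ T.dom :=
    Submodule.sum_mem _ fun i _ => Submodule.smul_mem _ _ (hedom i)
  have hvortho : ∀ m : ℕ, m < n + k - 1 → ⟪∑ i, a i • e i, ef (m + 1)⟫ = 0 := by
    intro m hm
    rw [sum_inner]
    have h2 : ∑ i, ⟪a i • e i, ef (m + 1)⟫ = ∑ i, a i * ⟪e i, ef (m + 1)⟫ :=
      Finset.sum_congr rfl fun i _ => real_inner_smul_left _ _ _
    rw [h2]
    exact hLa ⟨m, hm⟩
  have hnormv : ⟪(∑ i, a i • e i : Lp ℝ 2 μ), ∑ i, a i • e i⟫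
      = ∑ i, a i ^ 2 * ⟪e i, e i⟫ := by
    rw [sum_inner]
    refine Finset.sum_congr rfl fun i _ => ?_
    rw [real_inner_smul_left, inner_sum]
    have hz : ∀ j ∈ Finset.univ, j ≠ i → ⟪e i, a j • e j⟫ = 0 := fun j _ hj => by
      rw [real_inner_smul_right, hinner0 i j (Ne.symm hj), mul_zero]
    rw [Finset.sum_eq_single i hz (fun h => absurd (Finset.mem_univ i) h),
      real_inner_smul_right]
    ring
  have hvpos : 0 < ⟪(∑ i, a i • e i : Lp ℝ 2 μ), ∑ i, a i • e i⟫ := by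
    rw [hnormv]
    obtain ⟨i0, hi0⟩ : ∃ i, a i ≠ 0 := by
      by_contra h; push_neg at h; exact ha0 (funext h)
    refine Finset.sum_pos' (fun i _ => mul_nonneg (sq_nonneg _) (hepos i).le)
      ⟨i0, Finset.mem_univ _, mul_pos ?_ (hepos i0)⟩
    exact lt_of_le_of_ne (sq_nonneg _) (Ne.symm (pow_ne_zero 2 hi0))
  have hQv : T.Q (∑ i, a i • e i) (∑ i, a i • e i)
      ≤ lam n * ∑ i, a i ^ 2 * ⟪e i, e i⟫ :=
    quadratic_bound T e a (lam n) hQij_le hE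
  have hQlow : lam (n + k - 1 + 1) * ⟪(∑ i, a i • e i : Lp ℝ 2 μ), ∑ i, a i • e i⟫
      ≤ T.Q (∑ i, a i • e i) (∑ i, a i • e i) :=
    variational_bound T lam ef hmono horth hbasis heigs (n + k - 1)
      (∑ i, a i • e i) hvdom hvortho
  have hnk : n + k - 1 + 1 = n + k := by omega
  rw [hnk] at hQlow
  -- spectral gap
  obtain ⟨aa, ha1, han, hnak, hiff⟩ := hmult
  have hgap : lam n < lam (n + k) := by
    have h1 : lam n ≤ lam (aa + k) := hmono n (aa + k) hn (by omega)
    have h2 : lam (aa + k) ≠ lam n := by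
      intro h
      have := (hiff (aa + k) (by omega)).mp h
      omega
    have h3 : lam (aa + k) ≤ lam (n + k) := hmono (aa + k) (n + k) (by omega) (by omega)
    rcases lt_or_eq_of_le h1 with h | h
    · linarith
    · exact absurd h.symm h2
  rw [hnormv] at hQlow hvpos
  nlinarith [hQv, hQlow, hvpos, hgap]
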